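/- Let R be a reduced commutative ring with identity. If the polynomial ring R[t] is strongly atomic (every nonzero nonunit of R[t] is a finite product of strong atoms of R[t]), then R itself is strongly atomic. -/

import Mathlib

open Polynomial

/-- A strong atom: a nonzero nonunit such that in any factorization one factor is a unit. -/
def StrongAtom {S : Type*} [CommRing S] (a : S) : Prop :=
  a ≠ 0 ∧ ¬IsUnit a ∧ ∀ b c : S, a = b * c → IsUnit b ∨ IsUnit c

section Aux

variable {R : Type*} [CommRing R] [IsReduced R]

/-- If a strong atom of `R[t]` divides a nonzero constant, the cofactor is constant. -/
lemma cofactor_constant {g h : R[X]} {x : R} (hg : StrongAtom g) (hx : x ≠ 0)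
    (hgh : g * h = C x) : h = C (h.coeff 0) := by
  have hgw : g * (h - C (h.coeff 0)) = 0 := by
    ext n
    rw [coeff_zero]
    have hnil : IsNilpotent ((g * (h - C (h.coeff 0))).coeff n) := by
      rw [nilpotent_iff_mem_prime]
      intro P hP
      rw [← Ideal.Quotient.eq_zero_iff_mem, ← coeff_map]
      suffices hs : (g * (h - C (h.coeff 0))).map (Ideal.Quotient.mk P) = 0 by
        rw [hs, coeff_zero]
      rw [Polynomial.map_mul, Polynomial.map_sub, map_C]
      set G := g.map (Ideal.Quotient.mk P) with hG
      set H := h.map (Ideal.Quotient.mk P) with hH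
      have hC0 : Ideal.Quotient.mk P (h.coeff 0) = H.coeff 0 := (coeff_map _ 0).symm
      have key : G * H = C (Ideal.Quotient.mk P x) := by
        rw [hG, hH, ← Polynomial.map_mul, hgh, map_C]
      by_cases h0 : Ideal.Quotient.mk P x = 0
      · rw [h0, map_zero] at key
        rcases mul_eq_zero.mp key with hG0 | hH0
        · rw [hG0, zero_mul]
        · rw [hC0, hH0]; simp
      · have hG0 : G ≠ 0 := by
          intro hh
          rw [hh, zero_mul] at key
          exact h0 (C_eq_zero.mp key.symm)
        have hH0 : H ≠ 0 := by
          intro hh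
          rw [hh, mul_zero] at key
          exact h0 (C_eq_zero.mp key.symm)
        have hdeg : H.natDegree = 0 := by
          have h1 := natDegree_mul hG0 hH0
          rw [key, natDegree_C] at h1
          omega
        have hHc : H = C (H.coeff 0) := eq_C_of_natDegree_eq_zero hdeg
        rw [hC0, ← hHc, sub_self, mul_zero]
    exact hnil.eq_zero
  have hfac : g = g * (1 + X * (h - C (h.coeff 0))) := by
    have h1 : g * (1 + X * (h - C (h.coeff 0))) = g + X * (g * (h - C (h.coeff 0))) := by ring
    rw [h1, hgw, mul_zero, add_zero]
  rcases hg.2.2 _ _ hfac with h1 | h2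
  · exact absurd h1 hg.2.1
  · have h3 := (isUnit_iff_coeff_isUnit_isNilpotent.mp h2).2
    have hw : h - C (h.coeff 0) = 0 := by
      ext n
      have h4 : IsNilpotent ((1 + X * (h - C (h.coeff 0))).coeff (n + 1)) :=
        h3 (n + 1) (Nat.succ_ne_zero n)
      have h5 : (1 + X * (h - C (h.coeff 0))).coeff (n + 1)
          = (h - C (h.coeff 0)).coeff n := by
        rw [coeff_add, coeff_X_mul, coeff_one]
        simp
      rw [h5] at h4
      simpa using h4.eq_zero
    exact sub_eq_zero.mp hw

/-- In any factorization of a nonzero constant into strong atoms, all atoms are constant. -/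
lemma list_atoms_const (n : ℕ) :
    ∀ L : List (Polynomial R), L.length ≤ n → (∀ p ∈ L, StrongAtom p) →
      ∀ x : R, x ≠ 0 → L.prod = C x → ∀ p ∈ L, p = C (p.coeff 0) := by
  classical
  induction n with
  | zero =>
    intro L hL _ x _ _ p hp
    rw [Nat.le_zero, List.length_eq_zero_iff] at hL
    subst hL
    simp at hp
  | succ n ih =>
    intro L hL hatoms x hx hprod p hp
    have perm1 : L.Perm (p :: L.erase p) := List.perm_cons_erase hp
    have hprod1 : p * (L.erase p).prod = C x := by
      rw [← List.prod_cons, ← perm1.prod_eq, hprod]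
    match hE : L.erase p with
    | [] =>
      rw [hE, List.prod_nil, mul_one] at hprod1
      rw [hprod1, coeff_C_zero]
    | q :: L'' =>
      rw [hE, List.prod_cons] at hprod1
      have hq : q ∈ L := List.mem_of_mem_erase (by rw [hE]; exact List.mem_cons_self)
      have hqK : q * (p * L''.prod) = C x := by
        rw [← hprod1]; ring
      have hKconst := cofactor_constant (hatoms q hq) hx hqK
      set u := (p * L''.prod).coeff 0 with hu
      have hu0 : u ≠ 0 := by
        intro h0
        apply hx
        apply C_eq_zero.mp
        rw [← hqK, hKconst, h0, map_zero, mul_zero]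
      have hlen : (p :: L'').length ≤ n := by
        have h1 : L.length = (p :: L.erase p).length := perm1.length_eq
        rw [hE] at h1
        simp only [List.length_cons] at h1 ⊢
        omega
      have hmem : ∀ r ∈ p :: L'', StrongAtom r := by
        intro r hr
        rcases List.mem_cons.mp hr with h | h
        · subst h; exact hatoms _ hp
        · exact hatoms _ (List.mem_of_mem_erase (by rw [hE]; exact List.mem_cons_of_mem _ h))
      exact ih (p :: L'') hlen hmem u hu0 (by rw [List.prod_cons, hKconst]) p
        List.mem_cons_self

lemma strongAtom_of_C {c : R} (h : StrongAtom (C c)) : StrongAtom c := by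
  refine ⟨fun h0 => h.1 (by rw [h0, map_zero]), fun hu => h.2.1 (isUnit_C.mpr hu), ?_⟩
  intro b d hbd
  rcases h.2.2 (C b) (C d) (by rw [← C_mul, ← hbd]) with h1 | h1
  · exact Or.inl (isUnit_C.mp h1)
  · exact Or.inr (isUnit_C.mp h1)

end Aux

theorem strongly_atomic_descends (R : Type*) [CommRing R] [IsReduced R]
    (hRt : ∀ f : Polynomial R, f ≠ 0 → ¬IsUnit f →
      ∃ (m : ℕ) (g : Fin m → Polynomial R), 1 ≤ m ∧ (∀ i, StrongAtom (g i)) ∧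
        f = ∏ i, g i) :
    ∀ a : R, a ≠ 0 → ¬IsUnit a →
      ∃ (m : ℕ) (b : Fin m → R), 1 ≤ m ∧ (∀ i, StrongAtom (b i)) ∧ a = ∏ i, b i := by
  intro a ha hau
  obtain ⟨m, g, hm, hatoms, hfac⟩ := hRt (C a) (by rwa [Ne, C_eq_zero])
    (by rwa [isUnit_C])
  have hlist : ∀ p ∈ List.ofFn g, StrongAtom p := by
    intro p hp
    obtain ⟨i, hi⟩ := List.mem_ofFn.mp hp
    exact hi ▸ hatoms i
  have hprod : (List.ofFn g).prod = C a := by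
    rw [List.prod_ofFn, ← hfac]
  have hconst : ∀ i, g i = C ((g i).coeff 0) := fun i =>
    list_atoms_const (List.ofFn g).length (List.ofFn g) le_rfl hlist a ha hprod (g i)
      (List.mem_ofFn.mpr ⟨i, rfl⟩)
  refine ⟨m, fun i => (g i).coeff 0, hm, ?_, ?_⟩
  · intro i
    have hA := hatoms i
    rw [hconst i] at hA
    exact strongAtom_of_C hA
  · apply C_injective
    calc C a = ∏ i, g i := hfac
      _ = ∏ i, C ((g i).coeff 0) := Finset.prod_congr rfl fun i _ => hconst i
      _ = C (∏ i, (g i).coeff 0) := by rw [map_prod]
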